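/- On the weighted projective space $P=P(3,2,1)$ (so $k=6$), the sheaf $O_P(-5)$ is $0$-wregular, but its restriction $O_{H_2}(-5)$ to the coordinate hyperplane $H_2=\{x_2=0\}\cong P(3,2)$ is not $0$-wregular. -/

import Mathlib

/-!
STATEMENT 8 (Example `ex:badwreg`).

On the weighted projective space `P = P(3,2,1)` (so `k = 6`), the sheaf `O_P(-5)`
is `0`-wregular, but its restriction `O_{H_2}(-5)` to the coordinate hyperplane
`H_2 = {x_2 = 0} ≅ P(3,2)` is not `0`-wregular.

The cohomology of the line bundles `O(d)` on a weighted projective space with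
weights `w` is the concrete function `lineH` below, so the sheaf `O(e)` has
`dim_K H^i(O(e)(t)) = lineH w i (e + t)`.
-/

/-- `wh0 w d` is the dimension of the degree-`d` graded piece of
`K[x_0, …, x_{N-1}]` with `deg x_j = w j`, i.e. `dim_K H^0(P, O_P(d))` on the
weighted projective space `P = P(w)` of dimension `N - 1`: the number of
monomials of weighted degree `d`. -/
noncomputable def wh0 {N : ℕ} (w : Fin N → ℕ) (d : ℤ) : ℕ :=
  Set.ncard {v : Fin N → ℕ | ∑ j, (v j : ℤ) * (w j : ℤ) = d}

/-- `lineH w i d = dim_K H^i(P, O_P(d))` on the weighted projective space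
`P = P(w)` of dimension `N - 1`:  `H^0` is the space of weighted-degree-`d`
polynomials, the intermediate cohomology of a line bundle vanishes (`P` is
arithmetically Cohen–Macaulay), and `H^{N-1}(O_P(d)) ≅ H^0(O_P(-d - w̄))^∨` by
Serre duality, `ω_P = O_P(-w̄)` with `w̄ = ∑ j, w j`. -/
noncomputable def lineH {N : ℕ} (w : Fin N → ℕ) (i : ℕ) (d : ℤ) : ℕ :=
  if i = 0 then wh0 w d
  else if i = N - 1 then wh0 w (-d - ∑ j, (w j : ℤ)) else 0

/-- `wbar w i = w̄_i`, the sum of the `i + 1` largest weights (the weights are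
listed in decreasing order). -/
def wbar {N : ℕ} (w : Fin N → ℕ) (i : ℕ) : ℤ :=
  ∑ j ∈ Finset.univ.filter (fun j : Fin N => (j : ℕ) ≤ i), (w j : ℤ)

/-- `wlcm w = k = lcm(w 0, …, w (N-1))`. -/
def wlcm {N : ℕ} (w : Fin N → ℕ) : ℕ :=
  Finset.univ.lcm w

/-- `m`-semiwregularity of a coherent sheaf `F` on the weighted projective space
`P = P(w)` of dimension `N - 1`, in terms of `h i t = dim_K H^i(P, F(t))`:
`H^i(F(t + (m+1)k - w̄_i)) = 0` for all `i = 1, …, N-1` and all `t ≥ 0`. -/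
def WSemiReg {N : ℕ} (w : Fin N → ℕ) (h : ℕ → ℤ → ℕ) (m : ℤ) : Prop :=
  ∀ i ∈ Finset.Icc 1 (N - 1), ∀ t : ℤ, 0 ≤ t →
    h i (t + (m + 1) * (wlcm w : ℤ) - wbar w i) = 0

/-- `m`-wregularity: `m`-semiwregularity together with `H^0(F((m+1)k)) ≠ 0`. -/
def WReg {N : ℕ} (w : Fin N → ℕ) (h : ℕ → ℤ → ℕ) (m : ℤ) : Prop :=
  WSemiReg w h m ∧ h 0 ((m + 1) * (wlcm w : ℤ)) ≠ 0


lemma wh0_neg {N : ℕ} (w : Fin N → ℕ) (d : ℤ) (hd : d < 0) : wh0 w d = 0 := by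
  unfold wh0
  convert Set.ncard_empty (Fin N → ℕ)
  ext v
  simp only [Set.mem_setOf_eq, Set.mem_empty_iff_false, iff_false]
  intro h
  have : (0:ℤ) ≤ ∑ j, (v j : ℤ) * (w j : ℤ) :=
    Finset.sum_nonneg fun j _ => mul_nonneg (Int.natCast_nonneg _) (Int.natCast_nonneg _)
  omega

lemma wh0_32_1 : wh0 ![3, 2] 1 = 0 := by
  unfold wh0
  convert Set.ncard_empty (Fin 2 → ℕ)
  ext v
  simp only [Set.mem_setOf_eq, Set.mem_empty_iff_false, iff_false, Fin.sum_univ_two]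
  simp only [Matrix.cons_val_zero, Matrix.cons_val_one, Matrix.head_cons]
  push_cast
  omega

lemma wh0_321_1 : wh0 ![3, 2, 1] 1 = 1 := by
  unfold wh0
  have : {v : Fin 3 → ℕ | ∑ j, (v j : ℤ) * ((![3,2,1] : Fin 3 → ℕ) j : ℤ) = 1}
      = {![0, 0, 1]} := by
    ext v
    simp only [Set.mem_setOf_eq, Set.mem_singleton_iff, Fin.sum_univ_three]
    simp only [Matrix.cons_val_zero, Matrix.cons_val_one, Matrix.head_cons,
      Matrix.cons_val_two, Matrix.tail_cons]
    constructor
    · intro h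
      have h0 : v 0 = 0 ∧ v 1 = 0 ∧ v 2 = 1 := by push_cast at h; omega
      funext i
      fin_cases i <;> simp [h0.1, h0.2.1, h0.2.2]
    · intro h
      subst h
      norm_num
      rfl
  rw [this, Set.ncard_singleton]

theorem example_P321_wregular_restriction_not_wregular :
    -- `O_P(-5)` is `0`-wregular on `P(3,2,1)` ...
    WReg ![3, 2, 1] (fun i t => lineH ![3, 2, 1] i (-5 + t)) 0 ∧
    -- ... but `O_{H_2}(-5)` is not `0`-wregular on `H_2 ≅ P(3,2)`.
    ¬ WReg ![3, 2] (fun i t => lineH ![3, 2] i (-5 + t)) 0 := by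
  have hk3 : wlcm ![3, 2, 1] = 6 := by decide
  have hk2 : wlcm ![3, 2] = 6 := by decide
  constructor
  · constructor
    · intro i hi t ht
      simp only [Finset.mem_Icc] at hi
      obtain ⟨h1, h2⟩ := hi
      norm_num at h2
      interval_cases i
      · simp [lineH]
      · simp only [lineH, hk3]
        rw [if_pos trivial]
        apply wh0_neg
        have hw : wbar ![3, 2, 1] 2 = 6 := by decide
        have hs : ∑ j, ((![3,2,1] : Fin 3 → ℕ) j : ℤ) = 6 := by decide
        rw [hw, hs]
        omega
    · simp only [hk3]
      norm_num [lineH, wh0_321_1]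
  · rintro ⟨-, h0⟩
    apply h0
    simp only [hk2]
    norm_num [lineH, wh0_32_1]
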